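/- Let n ≥ 1, θ⃗ ∈ ℝ^n, let π : ℝ^n → (ℝ/ℤ)^n denote the quotient map onto the n-torus, let T_θ be the closure in (ℝ/ℤ)^n of the set {π(tθ⃗) : t ∈ ℝ} (a closed subgroup of the torus), and let m_θ be the Haar probability measure on the compact group T_θ. Then for every continuous function f : T_θ → ℂ and every x ∈ T_θ, lim_{T→+∞} (1/T) ∫_0^T f(x + π(tθ⃗)) dt = ∫_{T_θ} f dm_θ. -/

import Mathlib

open Filter MeasureTheory Complex AddCircle Topology

namespace Stmt1Aux

noncomputable section
variable {n : ℕ}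

def chi (k : Fin n → ℤ) : C(Fin n → AddCircle (1:ℝ), ℂ) :=
  ⟨fun y => ∏ i, fourier (k i) (y i),
    continuous_finset_prod _ fun i _ =>
      (fourier (k i)).continuous.comp (continuous_apply i)⟩

lemma chi_apply (k : Fin n → ℤ) (y : Fin n → AddCircle (1:ℝ)) :
    chi k y = ∏ i, fourier (k i) (y i) := rfl

lemma chi_add_arg (k : Fin n → ℤ) (y z : Fin n → AddCircle (1:ℝ)) :
    chi k (y + z) = chi k y * chi k z := by
  simp only [chi_apply, Pi.add_apply, ← Finset.prod_mul_distrib]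
  refine Finset.prod_congr rfl fun i _ => ?_
  rw [fourier_apply, fourier_apply, fourier_apply, smul_add, AddCircle.toCircle_add]
  push_cast
  ring

lemma chi_flow (k : Fin n → ℤ) (θ : Fin n → ℝ) (t : ℝ) :
    chi k (fun i => ((t * θ i : ℝ) : AddCircle (1:ℝ)))
      = Complex.exp (Complex.I * ((2 * Real.pi * ∑ i, (k i : ℝ) * θ i : ℝ) : ℂ) * t) := by
  simp only [chi_apply, fourier_coe_apply]
  rw [← Complex.exp_sum]
  congr 1
  push_cast
  simp only [Finset.mul_sum, Finset.sum_mul]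
  refine Finset.sum_congr rfl fun i _ => by ring

lemma chi_zero : (chi (0 : Fin n → ℤ)) = 1 := by
  ext y
  simp [chi_apply, fourier_zero]

lemma chi_mul_chi (k l : Fin n → ℤ) : chi k * chi l = chi (k + l) := by
  ext y
  simp only [ContinuousMap.mul_apply, chi_apply, Pi.add_apply, fourier_add,
    ← Finset.prod_mul_distrib]

lemma star_chi (k : Fin n → ℤ) : star (chi k) = chi (-k) := by
  ext y
  simp only [ContinuousMap.star_apply, chi_apply, Pi.neg_apply, fourier_neg]
  rw [RCLike.star_def, map_prod]

lemma chi_single (i : Fin n) (y : Fin n → AddCircle (1:ℝ)) :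
    chi (Pi.single i 1) y = toCircle (y i) := by
  rw [chi_apply, Finset.prod_eq_single i]
  · rw [Pi.single_eq_same, fourier_one]
  · intro j _ hj
    rw [Pi.single_eq_of_ne hj, fourier_zero]
  · simp

lemma avg_exp_tendsto {a : ℝ} (ha : a ≠ 0) :
    Tendsto (fun T : ℝ => (1/(T:ℂ)) * ∫ t in (0:ℝ)..T, Complex.exp (Complex.I * a * t))
      atTop (𝓝 0) := by
  have hc : (Complex.I * a) ≠ 0 := by
    simp [Complex.I_ne_zero, Complex.ofReal_eq_zero, ha]
  have key : ∀ T : ℝ, (∫ t in (0:ℝ)..T, Complex.exp (Complex.I * a * t))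
      = (Complex.exp (Complex.I * a * T) - 1) / (Complex.I * a) := by
    intro T
    rw [integral_exp_mul_complex hc]
    simp
  have habs : ∀ T : ℝ, ‖Complex.exp (Complex.I * a * T)‖ = 1 := by
    intro T
    rw [show (Complex.I * a * T) = ((a*T : ℝ):ℂ) * Complex.I by
      push_cast; ring, Complex.norm_exp_ofReal_mul_I]
  have hg : Tendsto (fun T : ℝ => 2 / ‖Complex.I * (a:ℂ)‖ * (1/T)) atTop (𝓝 (0:ℝ)) := by
    have : Tendsto (fun T : ℝ => (1/T)) atTop (𝓝 (0:ℝ)) := by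
      simpa using tendsto_inv_atTop_zero
    simpa using this.const_mul (2 / ‖Complex.I * (a:ℂ)‖)
  refine squeeze_zero_norm' ?_ hg
  · filter_upwards [eventually_ge_atTop (1:ℝ)] with T hT
    have hT0 : (0:ℝ) < T := one_pos.trans_le hT
    rw [key T]
    have h2 : ‖Complex.exp (Complex.I * a * T) - 1‖ ≤ 2 := by
      calc ‖Complex.exp (Complex.I * a * T) - 1‖
          ≤ ‖Complex.exp (Complex.I * a * T)‖ + ‖(1:ℂ)‖ := norm_sub_le _ _
        _ = 2 := by rw [habs T, norm_one]; norm_num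
    have h1 : ‖(1/(T:ℂ))‖ = 1/T := by
      rw [norm_div, norm_one, Complex.norm_real, Real.norm_eq_abs, abs_of_pos hT0]
    rw [norm_mul, h1, norm_div, mul_comm (2 / ‖Complex.I * (a:ℂ)‖)]
    gcongr

end
end Stmt1Aux

open Stmt1Aux

set_option maxHeartbeats 2000000 in
set_option synthInstance.maxHeartbeats 800000 in
/-- Unique ergodicity of the linear flow `t ↦ π(t θ)` on the closed subgroup `T_θ` of the
`n`-torus which is the closure of its image: time averages of a continuous function along
the flow started at any point `x ∈ T_θ` converge to the average against the Haar
probability measure of `T_θ`. -/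
theorem stmt_1 (n : ℕ) (hn : 1 ≤ n) (θ : Fin n → ℝ)
    (G : AddSubgroup (Fin n → AddCircle (1 : ℝ)))
    (hG : (G : Set (Fin n → AddCircle (1 : ℝ))) =
      closure (Set.range fun t : ℝ => fun i => ((t * θ i : ℝ) : AddCircle (1 : ℝ))))
    (m : Measure G) [m.IsAddHaarMeasure] [IsProbabilityMeasure m]
    (f : G → ℂ) (hf : Continuous f) (x : G) :
    Tendsto (fun T : ℝ => (1 / (T : ℂ)) * ∫ t in (0:ℝ)..T,
        f (x + ⟨fun i => ((t * θ i : ℝ) : AddCircle (1 : ℝ)), by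
          have hmem : (fun i => ((t * θ i : ℝ) : AddCircle (1 : ℝ)))
              ∈ (G : Set (Fin n → AddCircle (1 : ℝ))) := by
            rw [hG]; exact subset_closure ⟨t, rfl⟩
          exact hmem⟩))
      atTop (nhds (∫ y, f y ∂m)) := by
  classical
  -- compactness of `G`
  have hcl : IsClosed (G : Set (Fin n → AddCircle (1:ℝ))) := by
    rw [hG]; exact isClosed_closure
  haveI : CompactSpace G := isCompact_iff_compactSpace.mp hcl.isCompact
  haveI : BorelSpace G := Subtype.borelSpace (G : Set (Fin n → AddCircle (1:ℝ)))
  -- the flow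
  have hφmem : ∀ t : ℝ, (fun i => ((t * θ i : ℝ) : AddCircle (1:ℝ))) ∈ G := by
    intro t
    have : (fun i => ((t * θ i : ℝ) : AddCircle (1:ℝ)))
        ∈ (G : Set (Fin n → AddCircle (1:ℝ))) := by
      rw [hG]; exact subset_closure ⟨t, rfl⟩
    exact this
  set φG : ℝ → G := fun t => ⟨fun i => ((t * θ i : ℝ) : AddCircle (1:ℝ)), hφmem t⟩ with hφG
  have hφGcont : Continuous φG := by
    apply Continuous.subtype_mk
    apply continuous_pi
    intro i
    exact (AddCircle.continuous_mk' (1:ℝ)).comp (continuous_id.mul continuous_const)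
  -- restricted characters
  set ψ : (Fin n → ℤ) → C(G, ℂ) := fun k =>
    ⟨fun g => chi k (g : Fin n → AddCircle (1:ℝ)),
      (chi k).continuous.comp continuous_subtype_val⟩ with hψ
  have hψadd : ∀ (k : Fin n → ℤ) (g h : G), ψ k (g + h) = ψ k g * ψ k h := by
    intro k g h
    exact chi_add_arg k g h
  have hψstar : ∀ k : Fin n → ℤ, star (ψ k) = ψ (-k) := by
    intro k
    ext g
    have : (star (chi k)) (g : Fin n → AddCircle (1:ℝ))
        = chi (-k) (g : Fin n → AddCircle (1:ℝ)) := by rw [star_chi]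
    exact this
  -- integrability facts
  have hint : ∀ (g : C(G,ℂ)) (T : ℝ),
      IntervalIntegrable (fun t => g (x + φG t)) MeasureTheory.volume 0 T := by
    intro g T
    exact ((g.continuous.comp (continuous_const.add hφGcont))).intervalIntegrable 0 T
  have hintm : ∀ g : C(G,ℂ), Integrable (fun y => g y) m := by
    intro g
    exact g.continuous.integrable_of_hasCompactSupport
      (HasCompactSupport.of_compactSpace _)
  -- the property
  set P : C(G,ℂ) → Prop := fun g =>
    Tendsto (fun T : ℝ => (1/(T:ℂ)) * ∫ t in (0:ℝ)..T, g (x + φG t))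
      atTop (𝓝 (∫ y, g y ∂m)) with hP
  -- Step A : characters satisfy P
  have stepA : ∀ k : Fin n → ℤ, P (ψ k) := by
    intro k
    set a : ℝ := 2 * Real.pi * ∑ i, (k i : ℝ) * θ i with ha
    have hval : ∀ t : ℝ, ψ k (φG t) = Complex.exp (Complex.I * a * t) := by
      intro t
      exact chi_flow k θ t
    by_cases hA : a = 0
    · -- trivial character on G
      have h1 : ∀ g : G, ψ k g = 1 := by
        intro g
        have hg : (g : Fin n → AddCircle (1:ℝ))
            ∈ closure (Set.range fun t : ℝ => fun i => ((t * θ i : ℝ) : AddCircle (1:ℝ))) := by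
          rw [← hG]; exact g.2
        have hsub : (Set.range fun t : ℝ => fun i => ((t * θ i : ℝ) : AddCircle (1:ℝ)))
            ⊆ {y | chi k y = 1} := by
          rintro _ ⟨t, rfl⟩
          have := hval t
          rw [hA] at this
          simp at this; exact this
        have hcl2 : IsClosed {y : Fin n → AddCircle (1:ℝ) | chi k y = 1} :=
          isClosed_eq (chi k).continuous continuous_const
        exact closure_minimal hsub hcl2 hg
      have hev : ∀ᶠ (T : ℝ) in atTop,
          (1/(T:ℂ)) * (∫ t in (0:ℝ)..T, ψ k (x + φG t)) = 1 := by
        filter_upwards [eventually_gt_atTop (0:ℝ)] with T hT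
        simp only [h1]
        rw [intervalIntegral.integral_const]
        simp only [sub_zero, smul_eq_mul, mul_one]
        rw [show ((T:ℝ) • (1:ℂ)) = (T:ℂ) by simp [Complex.real_smul]]
        rw [one_div, inv_mul_cancel₀ (by exact_mod_cast hT.ne')]
      have hI : (∫ y, ψ k y ∂m) = 1 := by
        simp only [h1]
        simp
      simp only [hP]
      simp only [hI]
      exact Tendsto.congr' (Filter.EventuallyEq.symm hev) tendsto_const_nhds
    · -- nontrivial character
      have hGint : (∫ y, ψ k y ∂m) = 0 := by
        set t0 : ℝ := Real.pi / a with ht0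
        have hca : (a:ℂ) ≠ 0 := Complex.ofReal_ne_zero.mpr hA
        have hg0 : ψ k (φG t0) = -1 := by
          rw [hval t0]
          rw [show (Complex.I * (a:ℝ) * ((t0:ℝ):ℂ) : ℂ) = (Real.pi:ℂ) * Complex.I by
            rw [ht0, Complex.ofReal_div]
            field_simp]
          exact Complex.exp_pi_mul_I
        have hinv := integral_add_left_eq_self (μ := m) (fun y => ψ k y) (φG t0)
        have : ∀ y : G, ψ k (φG t0 + y) = ψ k (φG t0) * ψ k y := fun y => hψadd k _ y
        simp only [this, hg0] at hinv
        rw [integral_const_mul] at hinv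
        have h2 : (-1 - 1 : ℂ) * ∫ y, ψ k y ∂m = 0 := by
          rw [sub_mul]
          rw [hinv]
          ring
        have hne : (-1 - 1 : ℂ) ≠ 0 := by norm_num
        exact (mul_eq_zero.mp h2).resolve_left hne
      have heq : (fun T : ℝ => (1/(T:ℂ)) * ∫ t in (0:ℝ)..T, ψ k (x + φG t))
          = fun T : ℝ => ψ k x * ((1/(T:ℂ)) * ∫ t in (0:ℝ)..T,
              Complex.exp (Complex.I * a * t)) := by
        funext T
        have : ∀ t : ℝ, ψ k (x + φG t) = ψ k x * Complex.exp (Complex.I * a * t) := by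
          intro t
          rw [hψadd k x (φG t), hval t]
        simp only [this]
        rw [intervalIntegral.integral_const_mul]
        ring
      simp only [hP]
      simp only [hGint, heq]
      simpa using (avg_exp_tendsto hA).const_mul (ψ k x)
  -- Step B : the span
  set X : Set C(G,ℂ) := Set.range ψ with hX
  have hspan : ∀ g ∈ Submodule.span ℂ X, P g := by
    intro g hg
    induction hg using Submodule.span_induction with
    | mem g hgX => obtain ⟨k, rfl⟩ := hgX; exact stepA k
    | zero =>
      simp only [hP]
      simp only [ContinuousMap.zero_apply]
      simpa using (tendsto_const_nhds : Tendsto (fun _ : ℝ => (0:ℂ)) atTop (𝓝 0))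
    | add g h hgX hhX hPg hPh =>
      simp only [hP]
      have heq : ∀ T : ℝ, (1/(T:ℂ)) * (∫ t in (0:ℝ)..T, (g + h) (x + φG t))
          = (1/(T:ℂ)) * (∫ t in (0:ℝ)..T, g (x + φG t))
            + (1/(T:ℂ)) * (∫ t in (0:ℝ)..T, h (x + φG t)) := by
        intro T
        simp only [ContinuousMap.add_apply]
        rw [intervalIntegral.integral_add (hint g T) (hint h T), mul_add]
      have hI : (∫ y, (g + h) y ∂m) = (∫ y, g y ∂m) + ∫ y, h y ∂m := by
        simp only [ContinuousMap.add_apply]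
        exact integral_add (hintm g) (hintm h)
      rw [hI]
      exact Tendsto.congr (fun T => (heq T).symm) (hPg.add hPh)
    | smul c g hgX hPg =>
      simp only [hP]
      have heq : ∀ T : ℝ, (1/(T:ℂ)) * (∫ t in (0:ℝ)..T, (c • g) (x + φG t))
          = c * ((1/(T:ℂ)) * ∫ t in (0:ℝ)..T, g (x + φG t)) := by
        intro T
        simp only [ContinuousMap.smul_apply, smul_eq_mul]
        rw [intervalIntegral.integral_const_mul]
        ring
      have hI : (∫ y, (c • g) y ∂m) = c * ∫ y, g y ∂m := by
        simp only [ContinuousMap.smul_apply, smul_eq_mul]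
        exact integral_const_mul c _
      rw [hI]
      exact Tendsto.congr (fun T => (heq T).symm) (hPg.const_mul c)
  -- Step C : closure of P
  have hclosure : ∀ F : C(G,ℂ), F ∈ closure {g : C(G,ℂ) | P g} → P F := by
    intro F hF
    simp only [hP]
    rw [Metric.tendsto_atTop]
    intro ε hε
    obtain ⟨g, hgS, hgd⟩ := Metric.mem_closure_iff.mp hF (ε/4) (by linarith)
    have hgd' : ‖F - g‖ < ε/4 := by rwa [← dist_eq_norm]
    have hgP : P g := hgS
    simp only [hP] at hgP
    rw [Metric.tendsto_atTop] at hgP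
    obtain ⟨N, hN⟩ := hgP (ε/4) (by linarith)
    refine ⟨max N 1, fun T hT => ?_⟩
    have hT1 : (1:ℝ) ≤ T := le_trans (le_max_right N 1) hT
    have hTN : N ≤ T := le_trans (le_max_left N 1) hT
    have hT0 : (0:ℝ) < T := one_pos.trans_le hT1
    -- three pieces
    have hd1 : dist ((1/(T:ℂ)) * ∫ t in (0:ℝ)..T, F (x + φG t))
        ((1/(T:ℂ)) * ∫ t in (0:ℝ)..T, g (x + φG t)) ≤ ‖F - g‖ := by
      rw [dist_eq_norm, ← mul_sub, ← intervalIntegral.integral_sub (hint F T) (hint g T)]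
      have hbound : ∀ t ∈ Set.uIoc (0:ℝ) T, ‖F (x + φG t) - g (x + φG t)‖ ≤ ‖F - g‖ := by
        intro t _
        exact ((F - g).norm_coe_le_norm (x + φG t))
      have := intervalIntegral.norm_integral_le_of_norm_le_const hbound
      rw [norm_mul]
      have h1 : ‖(1/(T:ℂ))‖ = 1/T := by
        rw [norm_div, norm_one, Complex.norm_real, Real.norm_eq_abs, abs_of_pos hT0]
      rw [h1]
      calc (1/T) * ‖∫ t in (0:ℝ)..T, (F (x + φG t) - g (x + φG t))‖
          ≤ (1/T) * (‖F - g‖ * |T - 0|) := by gcongr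
        _ = ‖F - g‖ := by
            rw [sub_zero, abs_of_pos hT0]
            field_simp
    have hd2 : dist ((1/(T:ℂ)) * ∫ t in (0:ℝ)..T, g (x + φG t)) (∫ y, g y ∂m) < ε/4 :=
      hN T hTN
    have hd3 : dist (∫ y, g y ∂m) (∫ y, F y ∂m) ≤ ‖F - g‖ := by
      rw [dist_eq_norm, ← integral_sub (hintm g) (hintm F)]
      have hbound : ∀ᵐ y ∂m, ‖g y - F y‖ ≤ ‖F - g‖ := by
        filter_upwards with y
        rw [norm_sub_rev]
        exact ((F - g).norm_coe_le_norm y)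
      calc ‖∫ y, (g y - F y) ∂m‖ ≤ ‖F - g‖ * (m Set.univ).toReal :=
            norm_integral_le_of_norm_le_const hbound
        _ = ‖F - g‖ := by simp
    have htri := dist_triangle4 ((1/(T:ℂ)) * ∫ t in (0:ℝ)..T, F (x + φG t))
      ((1/(T:ℂ)) * ∫ t in (0:ℝ)..T, g (x + φG t)) (∫ y, g y ∂m) (∫ y, F y ∂m)
    linarith
  -- Step D : Stone-Weierstrass
  have hX1 : (1 : C(G,ℂ)) ∈ X := by
    refine ⟨0, ?_⟩
    ext g
    have : chi (0 : Fin n → ℤ) (g : Fin n → AddCircle (1:ℝ)) = 1 := by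
      rw [chi_zero]; rfl
    exact this
  have hXmul : ∀ f1 ∈ X, ∀ f2 ∈ X, f1 * f2 ∈ X := by
    rintro _ ⟨k, rfl⟩ _ ⟨l, rfl⟩
    refine ⟨k + l, ?_⟩
    ext g
    have : (chi k * chi l) (g : Fin n → AddCircle (1:ℝ))
        = chi (k + l) (g : Fin n → AddCircle (1:ℝ)) := by rw [chi_mul_chi]
    exact this.symm
  have hXstar : ∀ f1 ∈ X, star f1 ∈ X := by
    rintro _ ⟨k, rfl⟩
    exact ⟨-k, (hψstar k).symm⟩
  set SA : StarSubalgebra ℂ C(G,ℂ) :=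
    { toSubalgebra := (Submodule.span ℂ X).toSubalgebra
        (Submodule.subset_span hX1)
        (by
          intro f1 f2 h1 h2
          induction h1 using Submodule.span_induction with
          | mem u hu =>
            induction h2 using Submodule.span_induction with
            | mem v hv => exact Submodule.subset_span (hXmul u hu v hv)
            | zero => rw [mul_zero]; exact Submodule.zero_mem _
            | add v w _ _ hv hw => rw [mul_add]; exact Submodule.add_mem _ hv hw
            | smul c v _ hv => rw [mul_smul_comm]; exact Submodule.smul_mem _ c hv
          | zero => rw [zero_mul]; exact Submodule.zero_mem _
          | add u v _ _ hu hv => rw [add_mul]; exact Submodule.add_mem _ hu hv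
          | smul c u _ hu => rw [smul_mul_assoc]; exact Submodule.smul_mem _ c hu)
      star_mem' := by
        intro f1 h1
        induction h1 using Submodule.span_induction with
        | mem u hu => exact Submodule.subset_span (hXstar u hu)
        | zero => rw [star_zero]; exact Submodule.zero_mem _
        | add u v _ _ hu hv => rw [star_add]; exact Submodule.add_mem _ hu hv
        | smul c u _ hu =>
          rw [star_smul]
          exact Submodule.smul_mem _ _ hu } with hSA
  have hsep : SA.SeparatesPoints := by
    intro g h hgh
    have hval : (g : Fin n → AddCircle (1:ℝ)) ≠ (h : Fin n → AddCircle (1:ℝ)) := by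
      intro hc
      exact hgh (Subtype.ext hc)
    obtain ⟨i, hi⟩ := Function.ne_iff.mp hval
    refine ⟨_, ⟨ψ (Pi.single i 1), Submodule.subset_span ⟨Pi.single i 1, rfl⟩, rfl⟩, ?_⟩
    show ψ (Pi.single i 1) g ≠ ψ (Pi.single i 1) h
    have h1 : ψ (Pi.single i 1) g = toCircle ((g : Fin n → AddCircle (1:ℝ)) i) :=
      chi_single i _
    have h2 : ψ (Pi.single i 1) h = toCircle ((h : Fin n → AddCircle (1:ℝ)) i) :=
      chi_single i _
    rw [h1, h2]
    intro hc
    apply hi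
    exact injective_toCircle one_ne_zero (Circle.coe_injective hc)
  have htop := ContinuousMap.starSubalgebra_topologicalClosure_eq_top_of_separatesPoints SA hsep
  -- conclude
  set F : C(G,ℂ) := ⟨f, hf⟩ with hF
  have hFmem : F ∈ closure (SA : Set C(G,ℂ)) := by
    have : F ∈ SA.topologicalClosure := by rw [htop]; trivial
    exact this
  have hsub : (SA : Set C(G,ℂ)) ⊆ {g : C(G,ℂ) | P g} := fun g hg => hspan g hg
  have hPF : P F := hclosure F (closure_mono hsub hFmem)
  exact hPF
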